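/- Let P be a convex polyomino and let T be a triangulation of P. Then T is 3-colorable if and only if T contains no induced subgraph isomorphic to T1 and no induced subgraph isomorphic to T2. -/

import Mathlib

set_option synthInstance.maxSize 8000
set_option maxHeartbeats 1600000
set_option maxRecDepth 100000
set_option linter.unnecessarySeqFocus false


/-- The edges of the 3×3 grid graph on vertices `0,…,8` (labels `1,…,9`, rows
`(1,2,3), (4,5,6), (7,8,9)` from top to bottom; vertex `i : Fin 9` has label `i+1`). -/
def gridEdges33 : Set (Sym2 (Fin 9)) :=
  {s(0, 1), s(1, 2), s(3, 4), s(4, 5), s(6, 7), s(7, 8),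
   s(0, 3), s(1, 4), s(2, 5), s(3, 6), s(4, 7), s(5, 8)}

/-- The triangulation `T1`: the 3×3 grid together with the diagonals
`{2,4}, {2,6}, {5,7}, {6,8}` (in labels `1,…,9`). -/
def T1 : SimpleGraph (Fin 9) :=
  SimpleGraph.fromEdgeSet (gridEdges33 ∪ {s(1, 3), s(1, 5), s(4, 6), s(5, 7)})

/-- The triangulation `T2`: the 3×3 grid together with the diagonals
`{1,5}, {3,5}, {5,9}, {4,8}` (in labels `1,…,9`). -/
def T2 : SimpleGraph (Fin 9) :=
  SimpleGraph.fromEdgeSet (gridEdges33 ∪ {s(0, 4), s(2, 4), s(4, 8), s(3, 7)})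
/-- Two cells of `ℤ²` are edge-adjacent. -/
def CellAdj (a b : ℤ × ℤ) : Prop :=
  (a.1 - b.1).natAbs + (a.2 - b.2).natAbs = 1

/-- A polyomino: a finite nonempty set of cells, connected under edge-adjacency. -/
def IsPolyomino (P : Finset (ℤ × ℤ)) : Prop :=
  P.Nonempty ∧ ∀ a ∈ P, ∀ b ∈ P,
    Relation.ReflTransGen (fun x y => x ∈ P ∧ y ∈ P ∧ CellAdj x y) a b

/-- The vertex set of a polyomino: all corners of its cells. -/
def polyVerts (P : Finset (ℤ × ℤ)) : Finset (ℤ × ℤ) :=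
  P.biUnion fun c => {(c.1, c.2), (c.1 + 1, c.2), (c.1, c.2 + 1), (c.1 + 1, c.2 + 1)}

/-- The (ordered) pair `(u, v)` forms one of the four sides of the cell `c`. -/
def IsSideOf (c u v : ℤ × ℤ) : Prop :=
  (u = (c.1, c.2) ∧ v = (c.1 + 1, c.2)) ∨
  (u = (c.1, c.2 + 1) ∧ v = (c.1 + 1, c.2 + 1)) ∨
  (u = (c.1, c.2) ∧ v = (c.1, c.2 + 1)) ∨
  (u = (c.1 + 1, c.2) ∧ v = (c.1 + 1, c.2 + 1))

/-- The triangulation of the polyomino `P` determined by the choice `d` of a diagonal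
for each cell: all sides of cells of `P`, plus for each cell `c ∈ P` the main diagonal
`{c, c+(1,1)}` if `d c = 0` and the anti-diagonal `{c+(1,0), c+(0,1)}` if `d c = 1`. -/
def PolyTri (P : Finset (ℤ × ℤ)) (d : ℤ × ℤ → Fin 2) :
    SimpleGraph {v : ℤ × ℤ // v ∈ polyVerts P} :=
  SimpleGraph.fromRel fun u v =>
    (∃ c ∈ P, IsSideOf c u.val v.val) ∨
    (∃ c ∈ P, (d c = 0 ∧ u.val = (c.1, c.2) ∧ v.val = (c.1 + 1, c.2 + 1)) ∨
              (d c = 1 ∧ u.val = (c.1 + 1, c.2) ∧ v.val = (c.1, c.2 + 1)))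
/-- A polyomino is convex if each of its rows and columns is contiguous. -/
def IsConvexPolyomino (P : Finset (ℤ × ℤ)) : Prop :=
  (∀ i iM iR j : ℤ, (i, j) ∈ P → (iR, j) ∈ P → i < iM → iM < iR → (iM, j) ∈ P) ∧
  (∀ i j jM jR : ℤ, (i, j) ∈ P → (i, jR) ∈ P → j < jM → jM < jR → (i, jM) ∈ P)

/-! ### Pattern graphs -/

/-- Adjacency for the triangulated 2×2 block pattern determined by `D`.
Vertex `a : Fin 9` sits at position `(a % 3, a / 3)`; cell `k : Fin 4` at `(k % 2, k / 2)`. -/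
def patAdjP (D : Fin 4 → Fin 2) (a b : Fin 9) : Prop :=
  (a.val / 3 = b.val / 3 ∧ (a.val + 1 = b.val ∨ b.val + 1 = a.val)) ∨
  (a.val % 3 = b.val % 3 ∧ (a.val + 3 = b.val ∨ b.val + 3 = a.val)) ∨
  (∃ k : Fin 4,
    (D k = 0 ∧ ((a.val = 3 * (k.val / 2) + k.val % 2 ∧ b.val = a.val + 4) ∨
                (b.val = 3 * (k.val / 2) + k.val % 2 ∧ a.val = b.val + 4))) ∨
    (D k = 1 ∧ ((a.val = 3 * (k.val / 2) + k.val % 2 + 1 ∧ b.val = a.val + 2) ∨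
                (b.val = 3 * (k.val / 2) + k.val % 2 + 1 ∧ a.val = b.val + 2))))

instance (D : Fin 4 → Fin 2) (a b : Fin 9) : Decidable (patAdjP D a b) := by
  unfold patAdjP; infer_instance

theorem patAdjP_symm : ∀ (D : Fin 4 → Fin 2) (a b : Fin 9), patAdjP D a b → patAdjP D b a := by
  decide

def patternGraph (D : Fin 4 → Fin 2) : SimpleGraph (Fin 9) where
  Adj a b := patAdjP D a b
  symm := ⟨fun a b h => patAdjP_symm D a b h⟩
  loopless := by
    have h : ∀ (D : Fin 4 → Fin 2) (a : Fin 9), ¬ patAdjP D a a := by decide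
    exact ⟨fun a ha => h D a ha⟩

instance (D : Fin 4 → Fin 2) (a b : Fin 9) : Decidable ((patternGraph D).Adj a b) :=
  inferInstanceAs (Decidable (patAdjP D a b))

theorem patternGraph_adj (D : Fin 4 → Fin 2) (a b : Fin 9) :
    (patternGraph D).Adj a b ↔ patAdjP D a b := Iff.rfl

theorem T1_eq : T1 = patternGraph ![1,0,1,1] := by
  ext a b
  simp only [T1, SimpleGraph.fromEdgeSet_adj, gridEdges33, Set.mem_union,
    Set.mem_insert_iff, Set.mem_singleton_iff, Sym2.eq_iff, patternGraph_adj]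
  revert a b
  decide

theorem T2_eq : T2 = patternGraph ![0,1,0,0] := by
  ext a b
  simp only [T2, SimpleGraph.fromEdgeSet_adj, gridEdges33, Set.mem_union,
    Set.mem_insert_iff, Set.mem_singleton_iff, Sym2.eq_iff, patternGraph_adj]
  revert a b
  decide

theorem not_col_aux1 : ∀ v0 v1 v2 v3 v4 v5 v6 v7 v8 : Fin 3,
    ¬ (v0 ≠ v1 ∧ v1 ≠ v2 ∧ v3 ≠ v4 ∧ v4 ≠ v5 ∧ v6 ≠ v7 ∧ v7 ≠ v8 ∧
       v0 ≠ v3 ∧ v1 ≠ v4 ∧ v2 ≠ v5 ∧ v3 ≠ v6 ∧ v4 ≠ v7 ∧ v5 ≠ v8 ∧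
       v1 ≠ v3 ∧ v1 ≠ v5 ∧ v4 ≠ v6 ∧ v5 ≠ v7) := by decide

theorem not_col_aux2 : ∀ v0 v1 v2 v3 v4 v5 v6 v7 v8 : Fin 3,
    ¬ (v0 ≠ v1 ∧ v1 ≠ v2 ∧ v3 ≠ v4 ∧ v4 ≠ v5 ∧ v6 ≠ v7 ∧ v7 ≠ v8 ∧
       v0 ≠ v3 ∧ v1 ≠ v4 ∧ v2 ≠ v5 ∧ v3 ≠ v6 ∧ v4 ≠ v7 ∧ v5 ≠ v8 ∧
       v0 ≠ v4 ∧ v2 ≠ v4 ∧ v4 ≠ v8 ∧ v3 ≠ v7) := by decide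

theorem T1_not_colorable : ¬ T1.Colorable 3 := by
  rw [T1_eq]
  rintro ⟨C⟩
  exact not_col_aux1 (C 0) (C 1) (C 2) (C 3) (C 4) (C 5) (C 6) (C 7) (C 8)
    ⟨C.valid (by decide), C.valid (by decide), C.valid (by decide),
    C.valid (by decide), C.valid (by decide), C.valid (by decide), C.valid (by decide),
    C.valid (by decide), C.valid (by decide), C.valid (by decide), C.valid (by decide),
    C.valid (by decide), C.valid (by decide), C.valid (by decide), C.valid (by decide),
    C.valid (by decide)⟩

theorem T2_not_colorable : ¬ T2.Colorable 3 := by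
  rw [T2_eq]
  rintro ⟨C⟩
  exact not_col_aux2 (C 0) (C 1) (C 2) (C 3) (C 4) (C 5) (C 6) (C 7) (C 8)
    ⟨C.valid (by decide), C.valid (by decide), C.valid (by decide),
    C.valid (by decide), C.valid (by decide), C.valid (by decide), C.valid (by decide),
    C.valid (by decide), C.valid (by decide), C.valid (by decide), C.valid (by decide),
    C.valid (by decide), C.valid (by decide), C.valid (by decide), C.valid (by decide),
    C.valid (by decide)⟩

def permTr : Equiv.Perm (Fin 9) :=
  ⟨![0,3,6,1,4,7,2,5,8], ![0,3,6,1,4,7,2,5,8], by decide, by decide⟩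
def permFl : Equiv.Perm (Fin 9) :=
  ⟨![2,1,0,5,4,3,8,7,6], ![2,1,0,5,4,3,8,7,6], by decide, by decide⟩
def permAtr : Equiv.Perm (Fin 9) :=
  ⟨![2,5,8,1,4,7,0,3,6], ![6,3,0,7,4,1,8,5,2], by decide, by decide⟩

def mkIso (D D' : Fin 4 → Fin 2) (σ : Equiv.Perm (Fin 9))
    (h : ∀ a b, (patternGraph D').Adj (σ a) (σ b) ↔ (patternGraph D).Adj a b) :
    patternGraph D ≃g patternGraph D' := ⟨σ, h _ _⟩

theorem fin2_cases (x : Fin 2) : x = 0 ∨ x = 1 := by fin_cases x <;> simp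

theorem odd_block_iso (D : Fin 4 → Fin 2)
    (hodd : ((D 0).val + (D 1).val + (D 2).val + (D 3).val) % 2 = 1) :
    Nonempty (T1 ≃g patternGraph D) ∨ Nonempty (T2 ≃g patternGraph D) := by
  rcases fin2_cases (D 0) with h0|h0 <;> rcases fin2_cases (D 1) with h1|h1 <;>
    rcases fin2_cases (D 2) with h2|h2 <;> rcases fin2_cases (D 3) with h3|h3
  · rw [h0, h1, h2, h3] at hodd; exact absurd hodd (by decide)
  · refine Or.inl ?_
    have hD : D = ![0,0,0,1] := by
      funext k
      match k with
      | 0 => exact h0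
      | 1 => exact h1
      | 2 => exact h2
      | 3 => exact h3
    rw [hD, T1_eq]
    exact ⟨mkIso _ _ permAtr (by decide)⟩
  · refine Or.inr ?_
    have hD : D = ![0,0,1,0] := by
      funext k
      match k with
      | 0 => exact h0
      | 1 => exact h1
      | 2 => exact h2
      | 3 => exact h3
    rw [hD, T2_eq]
    exact ⟨mkIso _ _ permTr (by decide)⟩
  · rw [h0, h1, h2, h3] at hodd; exact absurd hodd (by decide)
  · refine Or.inr ?_
    have hD : D = ![0,1,0,0] := by
      funext k
      match k with
      | 0 => exact h0
      | 1 => exact h1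
      | 2 => exact h2
      | 3 => exact h3
    rw [hD, T2_eq]
    exact ⟨mkIso _ _ (Equiv.refl (Fin 9)) (by decide)⟩
  · rw [h0, h1, h2, h3] at hodd; exact absurd hodd (by decide)
  · rw [h0, h1, h2, h3] at hodd; exact absurd hodd (by decide)
  · refine Or.inr ?_
    have hD : D = ![0,1,1,1] := by
      funext k
      match k with
      | 0 => exact h0
      | 1 => exact h1
      | 2 => exact h2
      | 3 => exact h3
    rw [hD, T2_eq]
    exact ⟨mkIso _ _ permFl (by decide)⟩
  · refine Or.inl ?_
    have hD : D = ![1,0,0,0] := by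
      funext k
      match k with
      | 0 => exact h0
      | 1 => exact h1
      | 2 => exact h2
      | 3 => exact h3
    rw [hD, T1_eq]
    exact ⟨mkIso _ _ permFl (by decide)⟩
  · rw [h0, h1, h2, h3] at hodd; exact absurd hodd (by decide)
  · rw [h0, h1, h2, h3] at hodd; exact absurd hodd (by decide)
  · refine Or.inl ?_
    have hD : D = ![1,0,1,1] := by
      funext k
      match k with
      | 0 => exact h0
      | 1 => exact h1
      | 2 => exact h2
      | 3 => exact h3
    rw [hD, T1_eq]
    exact ⟨mkIso _ _ (Equiv.refl (Fin 9)) (by decide)⟩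
  · rw [h0, h1, h2, h3] at hodd; exact absurd hodd (by decide)
  · refine Or.inl ?_
    have hD : D = ![1,1,0,1] := by
      funext k
      match k with
      | 0 => exact h0
      | 1 => exact h1
      | 2 => exact h2
      | 3 => exact h3
    rw [hD, T1_eq]
    exact ⟨mkIso _ _ permTr (by decide)⟩
  · refine Or.inr ?_
    have hD : D = ![1,1,1,0] := by
      funext k
      match k with
      | 0 => exact h0
      | 1 => exact h1
      | 2 => exact h2
      | 3 => exact h3
    rw [hD, T2_eq]
    exact ⟨mkIso _ _ permAtr (by decide)⟩
  · rw [h0, h1, h2, h3] at hodd; exact absurd hodd (by decide)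


theorem block_embedding (P : Finset (ℤ × ℤ)) (d : ℤ × ℤ → Fin 2) (x y : ℤ)
    (h00 : (x, y) ∈ P) (h10 : (x + 1, y) ∈ P) (h01 : (x, y + 1) ∈ P) (h11 : (x + 1, y + 1) ∈ P)
    (D : Fin 4 → Fin 2)
    (hD0 : d (x, y) = D 0) (hD1 : d (x + 1, y) = D 1)
    (hD2 : d (x, y + 1) = D 2) (hD3 : d (x + 1, y + 1) = D 3) :
    Nonempty (patternGraph D ↪g PolyTri P d) := by
  have hcell : ∀ p q : ℤ, 0 ≤ p → p ≤ 1 → 0 ≤ q → q ≤ 1 → (x + p, y + q) ∈ P := by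
    intro p q hp0 hp1 hq0 hq1
    have h4 : ((x + p, y + q) = (x, y)) ∨ ((x + p, y + q) = (x + 1, y)) ∨
        ((x + p, y + q) = (x, y + 1)) ∨ ((x + p, y + q) = (x + 1, y + 1)) := by
      simp [Prod.ext_iff] <;> omega
    rcases h4 with h|h|h|h <;> rw [h] <;> assumption
  have hvm : ∀ p q : ℤ, 0 ≤ p → p ≤ 2 → 0 ≤ q → q ≤ 2 → (x + p, y + q) ∈ polyVerts P := by
    intro p q hp0 hp2 hq0 hq2
    have hc : (x + min p 1, y + min q 1) ∈ P :=
      hcell _ _ (by omega) (by omega) (by omega) (by omega)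
    refine Finset.mem_biUnion.2 ⟨_, hc, ?_⟩
    simp [Prod.ext_iff] <;> omega
  let F : Fin 9 → {v : ℤ × ℤ // v ∈ polyVerts P} := fun a =>
    ⟨(x + (a.val : ℤ) % 3, y + (a.val : ℤ) / 3),
      hvm _ _ (by omega) (by have := a.isLt; omega) (by omega) (by have := a.isLt; omega)⟩
  have hF : ∀ a : Fin 9, (F a).val = (x + (a.val : ℤ) % 3, y + (a.val : ℤ) / 3) := fun a => rfl
  have hinj : Function.Injective F := by
    intro a b h
    have h1 : (F a).val = (F b).val := congrArg Subtype.val h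
    rw [hF, hF, Prod.mk.injEq] at h1
    have ha := a.isLt; have hb := b.isLt
    exact Fin.ext (by omega)
  have hadj : ∀ (u v : {v : ℤ × ℤ // v ∈ polyVerts P}), u.val ≠ v.val →
      ((∃ c ∈ P, IsSideOf c u.val v.val) ∨
       (∃ c ∈ P, (d c = 0 ∧ u.val = (c.1, c.2) ∧ v.val = (c.1 + 1, c.2 + 1)) ∨
                 (d c = 1 ∧ u.val = (c.1 + 1, c.2) ∧ v.val = (c.1, c.2 + 1)))) →
      (PolyTri P d).Adj u v := by
    intro u v hne hrel
    simp only [PolyTri, SimpleGraph.fromRel_adj]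
    exact ⟨fun e => hne (congrArg Subtype.val e), Or.inl hrel⟩
  have adjH : ∀ (u v : {v : ℤ × ℤ // v ∈ polyVerts P}) (p q : ℤ), 0 ≤ p → p ≤ 1 → 0 ≤ q → q ≤ 2 →
      u.val = (x + p, y + q) → v.val = (x + p + 1, y + q) → (PolyTri P d).Adj u v := by
    intro u v p q hp0 hp1 hq0 hq2 hu hv
    apply hadj u v
    · rw [hu, hv]; intro e; rw [Prod.mk.injEq] at e; omega
    left
    rcases (by omega : q ≤ 1 ∨ q = 2) with hq | rfl
    · exact ⟨(x + p, y + q), hcell p q hp0 hp1 hq0 hq, Or.inl ⟨hu, hv⟩⟩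
    · refine ⟨(x + p, y + 1), hcell p 1 hp0 hp1 (by omega) (by omega), Or.inr (Or.inl ⟨?_, ?_⟩)⟩
      · rw [hu]; simp [Prod.ext_iff] <;> omega
      · rw [hv]; simp [Prod.ext_iff] <;> omega
  have adjV : ∀ (u v : {v : ℤ × ℤ // v ∈ polyVerts P}) (p q : ℤ), 0 ≤ p → p ≤ 2 → 0 ≤ q → q ≤ 1 →
      u.val = (x + p, y + q) → v.val = (x + p, y + q + 1) → (PolyTri P d).Adj u v := by
    intro u v p q hp0 hp2 hq0 hq1 hu hv
    apply hadj u v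
    · rw [hu, hv]; intro e; rw [Prod.mk.injEq] at e; omega
    left
    rcases (by omega : p ≤ 1 ∨ p = 2) with hp | rfl
    · refine ⟨(x + p, y + q), hcell p q hp0 hp hq0 hq1, Or.inr (Or.inr (Or.inl ⟨?_, ?_⟩))⟩
      · rw [hu]
      · rw [hv]
    · refine ⟨(x + 1, y + q), hcell 1 q (by omega) (by omega) hq0 hq1,
        Or.inr (Or.inr (Or.inr ⟨?_, ?_⟩))⟩
      · rw [hu]; simp [Prod.ext_iff] <;> omega
      · rw [hv]; simp [Prod.ext_iff] <;> omega
  have adjD0 : ∀ (u v : {v : ℤ × ℤ // v ∈ polyVerts P}) (c : ℤ × ℤ), c ∈ P → d c = 0 →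
      u.val = (c.1, c.2) → v.val = (c.1 + 1, c.2 + 1) → (PolyTri P d).Adj u v := by
    intro u v c hc h0 hu hv
    apply hadj u v
    · rw [hu, hv]; intro e; rw [Prod.mk.injEq] at e; omega
    exact Or.inr ⟨c, hc, Or.inl ⟨h0, hu, hv⟩⟩
  have adjD1 : ∀ (u v : {v : ℤ × ℤ // v ∈ polyVerts P}) (c : ℤ × ℤ), c ∈ P → d c = 1 →
      u.val = (c.1 + 1, c.2) → v.val = (c.1, c.2 + 1) → (PolyTri P d).Adj u v := by
    intro u v c hc h1 hu hv
    apply hadj u v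
    · rw [hu, hv]; intro e; rw [Prod.mk.injEq] at e; omega
    exact Or.inr ⟨c, hc, Or.inr ⟨h1, hu, hv⟩⟩
  have key : ∀ a b : Fin 9,
      ((∃ c ∈ P, IsSideOf c (F a).val (F b).val) ∨
       (∃ c ∈ P, (d c = 0 ∧ (F a).val = (c.1, c.2) ∧ (F b).val = (c.1 + 1, c.2 + 1)) ∨
                 (d c = 1 ∧ (F a).val = (c.1 + 1, c.2) ∧ (F b).val = (c.1, c.2 + 1)))) →
      patAdjP D a b := by
    intro a b h
    have hab := a.isLt; have hbb := b.isLt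
    rcases h with ⟨c, hc, hs⟩ | ⟨c, hc, ⟨h0, hu, hv⟩ | ⟨h1, hu, hv⟩⟩
    · rw [IsSideOf] at hs
      simp only [hF, Prod.mk.injEq] at hs
      rcases hs with ⟨⟨hu1, hu2⟩, hv1, hv2⟩|⟨⟨hu1, hu2⟩, hv1, hv2⟩|⟨⟨hu1, hu2⟩, hv1, hv2⟩|⟨⟨hu1, hu2⟩, hv1, hv2⟩
      · exact Or.inl ⟨by omega, Or.inl (by omega)⟩
      · exact Or.inl ⟨by omega, Or.inl (by omega)⟩
      · exact Or.inr (Or.inl ⟨by omega, Or.inl (by omega)⟩)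
      · exact Or.inr (Or.inl ⟨by omega, Or.inl (by omega)⟩)
    · simp only [hF, Prod.mk.injEq] at hu hv
      obtain ⟨hu1, hu2⟩ := hu; obtain ⟨hv1, hv2⟩ := hv
      rcases (by omega : (a.val = 0 ∧ b.val = 4) ∨ (a.val = 1 ∧ b.val = 5) ∨
          (a.val = 3 ∧ b.val = 7) ∨ (a.val = 4 ∧ b.val = 8)) with ⟨ha, hb⟩|⟨ha, hb⟩|⟨ha, hb⟩|⟨ha, hb⟩
      · have hceq : c = (x, y) := Prod.ext (by omega) (by omega)
        rw [hceq, hD0] at h0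
        exact Or.inr (Or.inr ⟨⟨0, by norm_num⟩, Or.inl ⟨h0, Or.inl ⟨by simp <;> omega, by omega⟩⟩⟩)
      · have hceq : c = (x + 1, y) := Prod.ext (by omega) (by omega)
        rw [hceq, hD1] at h0
        exact Or.inr (Or.inr ⟨⟨1, by norm_num⟩, Or.inl ⟨h0, Or.inl ⟨by simp <;> omega, by omega⟩⟩⟩)
      · have hceq : c = (x, y + 1) := Prod.ext (by omega) (by omega)
        rw [hceq, hD2] at h0
        exact Or.inr (Or.inr ⟨⟨2, by norm_num⟩, Or.inl ⟨h0, Or.inl ⟨by simp <;> omega, by omega⟩⟩⟩)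
      · have hceq : c = (x + 1, y + 1) := Prod.ext (by omega) (by omega)
        rw [hceq, hD3] at h0
        exact Or.inr (Or.inr ⟨⟨3, by norm_num⟩, Or.inl ⟨h0, Or.inl ⟨by simp <;> omega, by omega⟩⟩⟩)
    · simp only [hF, Prod.mk.injEq] at hu hv
      obtain ⟨hu1, hu2⟩ := hu; obtain ⟨hv1, hv2⟩ := hv
      rcases (by omega : (a.val = 1 ∧ b.val = 3) ∨ (a.val = 2 ∧ b.val = 4) ∨
          (a.val = 4 ∧ b.val = 6) ∨ (a.val = 5 ∧ b.val = 7)) with ⟨ha, hb⟩|⟨ha, hb⟩|⟨ha, hb⟩|⟨ha, hb⟩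
      · have hceq : c = (x, y) := Prod.ext (by omega) (by omega)
        rw [hceq, hD0] at h1
        exact Or.inr (Or.inr ⟨⟨0, by norm_num⟩, Or.inr ⟨h1, Or.inl ⟨by simp <;> omega, by omega⟩⟩⟩)
      · have hceq : c = (x + 1, y) := Prod.ext (by omega) (by omega)
        rw [hceq, hD1] at h1
        exact Or.inr (Or.inr ⟨⟨1, by norm_num⟩, Or.inr ⟨h1, Or.inl ⟨by simp <;> omega, by omega⟩⟩⟩)
      · have hceq : c = (x, y + 1) := Prod.ext (by omega) (by omega)
        rw [hceq, hD2] at h1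
        exact Or.inr (Or.inr ⟨⟨2, by norm_num⟩, Or.inr ⟨h1, Or.inl ⟨by simp <;> omega, by omega⟩⟩⟩)
      · have hceq : c = (x + 1, y + 1) := Prod.ext (by omega) (by omega)
        rw [hceq, hD3] at h1
        exact Or.inr (Or.inr ⟨⟨3, by norm_num⟩, Or.inr ⟨h1, Or.inl ⟨by simp <;> omega, by omega⟩⟩⟩)
  refine ⟨⟨⟨F, hinj⟩, ?_⟩⟩
  intro a b
  constructor
  · intro h
    simp only [PolyTri, SimpleGraph.fromRel_adj] at h
    rcases h.2 with h'|h'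
    · exact key a b h'
    · exact patAdjP_symm D b a (key b a h')
  · intro h
    have hab := a.isLt; have hbb := b.isLt
    rcases h with ⟨hrow, hc|hc⟩ | ⟨hcol, hc|hc⟩ | ⟨k, ⟨hk0, ⟨ha, hb⟩|⟨ha, hb⟩⟩ | ⟨hk1, ⟨ha, hb⟩|⟨ha, hb⟩⟩⟩
    · exact adjH (F a) (F b) ((a.val : ℤ) % 3) ((a.val : ℤ) / 3) (by omega) (by omega)
        (by omega) (by omega) (hF a)
        (by simp only [hF, Prod.mk.injEq]; omega)
    · exact (adjH (F b) (F a) ((b.val : ℤ) % 3) ((b.val : ℤ) / 3) (by omega) (by omega)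
        (by omega) (by omega) (hF b)
        (by simp only [hF, Prod.mk.injEq]; omega)).symm
    · exact adjV (F a) (F b) ((a.val : ℤ) % 3) ((a.val : ℤ) / 3) (by omega) (by omega)
        (by omega) (by omega) (hF a)
        (by simp only [hF, Prod.mk.injEq]; omega)
    · exact (adjV (F b) (F a) ((b.val : ℤ) % 3) ((b.val : ℤ) / 3) (by omega) (by omega)
        (by omega) (by omega) (hF b)
        (by simp only [hF, Prod.mk.injEq]; omega)).symm
    · -- main diagonal, forward
        rcases (by omega : k.val = 0 ∨ k.val = 1 ∨ k.val = 2 ∨ k.val = 3) with hkv|hkv|hkv|hkv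
        · have hk' : k = ⟨0, by norm_num⟩ := Fin.ext hkv
          rw [hk'] at hk0
          exact adjD0 (F a) (F b) (x, y) h00 (by rw [hD0]; exact hk0)
            (by simp [hF, Prod.ext_iff] <;> omega)
            (by simp [hF, Prod.ext_iff] <;> omega)
        · have hk' : k = ⟨1, by norm_num⟩ := Fin.ext hkv
          rw [hk'] at hk0
          exact adjD0 (F a) (F b) (x + 1, y) h10 (by rw [hD1]; exact hk0)
            (by simp [hF, Prod.ext_iff] <;> omega)
            (by simp [hF, Prod.ext_iff] <;> omega)
        · have hk' : k = ⟨2, by norm_num⟩ := Fin.ext hkv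
          rw [hk'] at hk0
          exact adjD0 (F a) (F b) (x, y + 1) h01 (by rw [hD2]; exact hk0)
            (by simp [hF, Prod.ext_iff] <;> omega)
            (by simp [hF, Prod.ext_iff] <;> omega)
        · have hk' : k = ⟨3, by norm_num⟩ := Fin.ext hkv
          rw [hk'] at hk0
          exact adjD0 (F a) (F b) (x + 1, y + 1) h11 (by rw [hD3]; exact hk0)
            (by simp [hF, Prod.ext_iff] <;> omega)
            (by simp [hF, Prod.ext_iff] <;> omega)
    · -- main diagonal, backward
        rcases (by omega : k.val = 0 ∨ k.val = 1 ∨ k.val = 2 ∨ k.val = 3) with hkv|hkv|hkv|hkv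
        · have hk' : k = ⟨0, by norm_num⟩ := Fin.ext hkv
          rw [hk'] at hk0
          exact (adjD0 (F b) (F a) (x, y) h00 (by rw [hD0]; exact hk0)
            (by simp [hF, Prod.ext_iff] <;> omega)
            (by simp [hF, Prod.ext_iff] <;> omega)).symm
        · have hk' : k = ⟨1, by norm_num⟩ := Fin.ext hkv
          rw [hk'] at hk0
          exact (adjD0 (F b) (F a) (x + 1, y) h10 (by rw [hD1]; exact hk0)
            (by simp [hF, Prod.ext_iff] <;> omega)
            (by simp [hF, Prod.ext_iff] <;> omega)).symm
        · have hk' : k = ⟨2, by norm_num⟩ := Fin.ext hkv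
          rw [hk'] at hk0
          exact (adjD0 (F b) (F a) (x, y + 1) h01 (by rw [hD2]; exact hk0)
            (by simp [hF, Prod.ext_iff] <;> omega)
            (by simp [hF, Prod.ext_iff] <;> omega)).symm
        · have hk' : k = ⟨3, by norm_num⟩ := Fin.ext hkv
          rw [hk'] at hk0
          exact (adjD0 (F b) (F a) (x + 1, y + 1) h11 (by rw [hD3]; exact hk0)
            (by simp [hF, Prod.ext_iff] <;> omega)
            (by simp [hF, Prod.ext_iff] <;> omega)).symm
    · -- anti diagonal, forward
        rcases (by omega : k.val = 0 ∨ k.val = 1 ∨ k.val = 2 ∨ k.val = 3) with hkv|hkv|hkv|hkv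
        · have hk' : k = ⟨0, by norm_num⟩ := Fin.ext hkv
          rw [hk'] at hk1
          exact adjD1 (F a) (F b) (x, y) h00 (by rw [hD0]; exact hk1)
            (by simp [hF, Prod.ext_iff] <;> omega)
            (by simp [hF, Prod.ext_iff] <;> omega)
        · have hk' : k = ⟨1, by norm_num⟩ := Fin.ext hkv
          rw [hk'] at hk1
          exact adjD1 (F a) (F b) (x + 1, y) h10 (by rw [hD1]; exact hk1)
            (by simp [hF, Prod.ext_iff] <;> omega)
            (by simp [hF, Prod.ext_iff] <;> omega)
        · have hk' : k = ⟨2, by norm_num⟩ := Fin.ext hkv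
          rw [hk'] at hk1
          exact adjD1 (F a) (F b) (x, y + 1) h01 (by rw [hD2]; exact hk1)
            (by simp [hF, Prod.ext_iff] <;> omega)
            (by simp [hF, Prod.ext_iff] <;> omega)
        · have hk' : k = ⟨3, by norm_num⟩ := Fin.ext hkv
          rw [hk'] at hk1
          exact adjD1 (F a) (F b) (x + 1, y + 1) h11 (by rw [hD3]; exact hk1)
            (by simp [hF, Prod.ext_iff] <;> omega)
            (by simp [hF, Prod.ext_iff] <;> omega)
    · -- anti diagonal, backward
        rcases (by omega : k.val = 0 ∨ k.val = 1 ∨ k.val = 2 ∨ k.val = 3) with hkv|hkv|hkv|hkv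
        · have hk' : k = ⟨0, by norm_num⟩ := Fin.ext hkv
          rw [hk'] at hk1
          exact (adjD1 (F b) (F a) (x, y) h00 (by rw [hD0]; exact hk1)
            (by simp [hF, Prod.ext_iff] <;> omega)
            (by simp [hF, Prod.ext_iff] <;> omega)).symm
        · have hk' : k = ⟨1, by norm_num⟩ := Fin.ext hkv
          rw [hk'] at hk1
          exact (adjD1 (F b) (F a) (x + 1, y) h10 (by rw [hD1]; exact hk1)
            (by simp [hF, Prod.ext_iff] <;> omega)
            (by simp [hF, Prod.ext_iff] <;> omega)).symm
        · have hk' : k = ⟨2, by norm_num⟩ := Fin.ext hkv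
          rw [hk'] at hk1
          exact (adjD1 (F b) (F a) (x, y + 1) h01 (by rw [hD2]; exact hk1)
            (by simp [hF, Prod.ext_iff] <;> omega)
            (by simp [hF, Prod.ext_iff] <;> omega)).symm
        · have hk' : k = ⟨3, by norm_num⟩ := Fin.ext hkv
          rw [hk'] at hk1
          exact (adjD1 (F b) (F a) (x + 1, y + 1) h11 (by rw [hD3]; exact hk1)
            (by simp [hF, Prod.ext_iff] <;> omega)
            (by simp [hF, Prod.ext_iff] <;> omega)).symm

theorem odd_block_T1T2 (P : Finset (ℤ × ℤ)) (d : ℤ × ℤ → Fin 2) (x y : ℤ)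
    (h00 : (x, y) ∈ P) (h10 : (x + 1, y) ∈ P) (h01 : (x, y + 1) ∈ P) (h11 : (x + 1, y + 1) ∈ P)
    (hodd : ((d (x, y)).val + (d (x + 1, y)).val + (d (x, y + 1)).val +
      (d (x + 1, y + 1)).val) % 2 = 1) :
    Nonempty (T1 ↪g PolyTri P d) ∨ Nonempty (T2 ↪g PolyTri P d) := by
  obtain ⟨emb⟩ := block_embedding P d x y h00 h10 h01 h11
    ![d (x, y), d (x + 1, y), d (x, y + 1), d (x + 1, y + 1)] rfl rfl rfl rfl
  rcases odd_block_iso ![d (x, y), d (x + 1, y), d (x, y + 1), d (x + 1, y + 1)] hodd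
    with h|h
  · obtain ⟨iso⟩ := h
    exact Or.inl ⟨emb.comp iso.toEmbedding⟩
  · obtain ⟨iso⟩ := h
    exact Or.inr ⟨emb.comp iso.toEmbedding⟩

/-- Signed partial sums of a `ZMod 3`-valued function on `ℤ`. -/
def isum (f : ℤ → ZMod 3) : ℤ → ZMod 3
  | Int.ofNat n => ∑ i ∈ Finset.range n, f (Int.ofNat i)
  | Int.negSucc n => -∑ i ∈ Finset.range (n + 1), f (Int.negSucc i)

theorem isum_succ (f : ℤ → ZMod 3) (x : ℤ) : isum f (x + 1) = isum f x + f x := by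
  cases x with
  | ofNat n =>
      have h : (Int.ofNat n) + 1 = Int.ofNat (n + 1) := rfl
      rw [h]
      show (∑ i ∈ Finset.range (n + 1), f (Int.ofNat i)) = _
      rw [Finset.sum_range_succ]
      rfl
  | negSucc n =>
      cases n with
      | zero =>
          show isum f 0 = isum f (-1) + f (-1)
          show (0 : ZMod 3) = -(∑ i ∈ Finset.range 1, f (Int.negSucc i)) + f (Int.negSucc 0)
          rw [Finset.sum_range_one]
          ring
      | succ m =>
          have h : Int.negSucc (m + 1) + 1 = Int.negSucc m := rfl
          have h2 : isum f (Int.negSucc (m + 1)) =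
              isum f (Int.negSucc m) - f (Int.negSucc (m + 1)) := by
            simp only [isum, Finset.sum_range_succ]
            ring
          rw [h, h2]
          ring

theorem zmod2_sum (a b c e : Fin 2) (h : (a.val + b.val + c.val + e.val) % 2 = 0) :
    ((a.val : ZMod 2) + b.val + c.val + e.val) = 0 := by revert a b c e; decide

theorem zmod2_self (a : ZMod 2) : a + a = 0 := by revert a; decide

theorem zmod2_eq_of_add_zero (x y : ZMod 2) (h : x + y = 0) : x = y := by revert x y; decide

theorem zmod2_ne_of_add_one (x y : ZMod 2) (h : x + y = 1) : x ≠ y := by revert x y; decide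

theorem zmod3_cases (x : ZMod 2) : x = 0 ∨ x = 1 := by revert x; decide


/-- The two possible values of a unit color-difference in `ZMod 3`. -/
def zc (x : ZMod 2) : ZMod 3 := if x = 0 then 1 else 2

theorem zc_ne_zero : ∀ x : ZMod 2, zc x ≠ 0 := by decide
theorem zc_add_self_ne : ∀ x y : ZMod 2, x = y → zc x + zc y ≠ 0 := by decide
theorem zc_ne_of_ne : ∀ x y : ZMod 2, x ≠ y → zc x ≠ zc y := by decide

theorem colorable_of_even (P : Finset (ℤ × ℤ)) (d : ℤ × ℤ → Fin 2)
    (hpoly : IsPolyomino P) (hconv : IsConvexPolyomino P)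
    (heven : ∀ x y : ℤ, (x, y) ∈ P → (x + 1, y) ∈ P → (x, y + 1) ∈ P → (x + 1, y + 1) ∈ P →
      ((d (x, y)).val + (d (x + 1, y)).val + (d (x, y + 1)).val +
        (d (x + 1, y + 1)).val) % 2 = 0) :
    (PolyTri P d).Colorable 3 := by
  classical
  obtain ⟨hne, hconn⟩ := hpoly
  set E : ℤ × ℤ → ZMod 2 := fun c => ((d c).val : ZMod 2) with hEdef
  have hE : ∀ x y : ℤ, (x, y) ∈ P → (x + 1, y) ∈ P → (x, y + 1) ∈ P → (x + 1, y + 1) ∈ P →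
      E (x, y) + E (x + 1, y) + E (x, y + 1) + E (x + 1, y + 1) = 0 := by
    intro x y h1 h2 h3 h4
    exact zmod2_sum _ _ _ _ (heven x y h1 h2 h3 h4)
  -- the two-column exchange lemma
  have hstep2 : ∀ (i j : ℤ), (i, j) ∈ P → (i, j + 1) ∈ P → (i + 1, j) ∈ P → (i + 1, j + 1) ∈ P →
      E (i, j) + E (i, j + 1) = E (i + 1, j) + E (i + 1, j + 1) := by
    intro i j h1 h2 h3 h4
    have h0 := hE i j h1 h3 h2 h4
    linear_combination h0 - zmod2_self (E (i + 1, j)) - zmod2_self (E (i + 1, j + 1))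
  have chain : ∀ (n : ℕ) (i j : ℤ), (i, j) ∈ P → (i, j + 1) ∈ P →
      (i + n, j) ∈ P → (i + n, j + 1) ∈ P →
      E (i, j) + E (i, j + 1) = E (i + n, j) + E (i + n, j + 1) := by
    intro n
    induction n with
    | zero => intro i j h1 h2 h3 h4; norm_num
    | succ m ih =>
        intro i j h1 h2 h3 h4
        have hc1 : (i + (m : ℤ) + 1, j) ∈ P := by
          have : (i + ((m : ℕ) + 1 : ℕ) : ℤ) = i + (m : ℤ) + 1 := by push_cast; ring
          rwa [this] at h3
        have hc2 : (i + (m : ℤ) + 1, j + 1) ∈ P := by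
          have : (i + ((m : ℕ) + 1 : ℕ) : ℤ) = i + (m : ℤ) + 1 := by push_cast; ring
          rwa [this] at h4
        have hm1 : (i + (m : ℤ), j) ∈ P := by
          rcases Nat.eq_zero_or_pos m with rfl|hm
          · simpa using h1
          · exact hconv.1 i (i + (m : ℤ)) (i + (m : ℤ) + 1) j h1 hc1 (by omega) (by omega)
        have hm2 : (i + (m : ℤ), j + 1) ∈ P := by
          rcases Nat.eq_zero_or_pos m with rfl|hm
          · simpa using h2
          · exact hconv.1 i (i + (m : ℤ)) (i + (m : ℤ) + 1) (j + 1) h2 hc2 (by omega) (by omega)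
        have e1 := ih i j h1 h2 hm1 hm2
        have e2 := hstep2 (i + (m : ℤ)) j hm1 hm2 hc1 hc2
        have : (i + ((m : ℕ) + 1 : ℕ) : ℤ) = i + (m : ℤ) + 1 := by push_cast; ring
        rw [this]
        linear_combination e1 + e2
  have chain2 : ∀ (i1 i2 j : ℤ), (i1, j) ∈ P → (i1, j + 1) ∈ P → (i2, j) ∈ P →
      (i2, j + 1) ∈ P → E (i1, j) + E (i1, j + 1) = E (i2, j) + E (i2, j + 1) := by
    intro i1 i2 j h1 h2 h3 h4
    rcases le_total i1 i2 with h|h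
    · obtain ⟨n, rfl⟩ : ∃ n : ℕ, i2 = i1 + n := ⟨(i2 - i1).toNat, by omega⟩
      exact chain _ i1 j h1 h2 h3 h4
    · obtain ⟨n, rfl⟩ : ∃ n : ℕ, i1 = i2 + n := ⟨(i1 - i2).toNat, by omega⟩
      exact (chain _ i2 j h3 h4 h1 h2).symm
  -- minimum occupied row
  have hjne : (P.image Prod.snd).Nonempty := hne.image _
  set jmin := (P.image Prod.snd).min' hjne with hjmindef
  have hjminle : ∀ c : ℤ × ℤ, c ∈ P → jmin ≤ c.2 := by
    intro c hc
    exact Finset.min'_le _ _ (Finset.mem_image_of_mem _ hc)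
  -- minimum of each column
  have hexmin : ∀ i : ℤ, (∃ j : ℤ, (i, j) ∈ P) → ∃ j0 : ℤ, (i, j0) ∈ P ∧
      ∀ j' : ℤ, (i, j') ∈ P → j0 ≤ j' := by
    intro i hex
    obtain ⟨j, hj⟩ := hex
    have hsne : ((P.filter (fun c => c.1 = i)).image Prod.snd).Nonempty := by
      refine ⟨j, ?_⟩
      simp only [Finset.mem_image, Finset.mem_filter]
      exact ⟨(i, j), ⟨hj, rfl⟩, rfl⟩
    refine ⟨((P.filter (fun c => c.1 = i)).image Prod.snd).min' hsne, ?_, ?_⟩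
    · obtain ⟨c, hc, hc2⟩ := Finset.mem_image.1 (Finset.min'_mem _ hsne)
      have hc' := Finset.mem_filter.1 hc
      have hcc : c = (i, ((P.filter (fun c => c.1 = i)).image Prod.snd).min' hsne) :=
        Prod.ext hc'.2 hc2
      rw [← hcc]; exact hc'.1
    · intro j' hj'
      apply Finset.min'_le
      simp only [Finset.mem_image, Finset.mem_filter]
      exact ⟨(i, j'), ⟨hj', rfl⟩, rfl⟩
  obtain ⟨cm, hcmP, hcmmin⟩ : ∃ cm : ℤ → ℤ,
      (∀ i : ℤ, (∃ j : ℤ, (i, j) ∈ P) → (i, cm i) ∈ P) ∧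
      (∀ i j : ℤ, (i, j) ∈ P → cm i ≤ j) := by
    refine ⟨fun i => if h : ∃ j : ℤ, (i, j) ∈ P then (hexmin i h).choose else 0, ?_, ?_⟩
    · intro i h
      simp only [dif_pos h]
      exact (hexmin i h).choose_spec.1
    · intro i j hj
      have h : ∃ j' : ℤ, (i, j') ∈ P := ⟨j, hj⟩
      simp only [dif_pos h]
      exact (hexmin i h).choose_spec.2 j hj
  -- link columns
  obtain ⟨lnk, hlnkspec⟩ : ∃ lnk : ℤ → ℤ, ∀ j : ℤ,
      (∃ i : ℤ, (i, j) ∈ P ∧ (i, j - 1) ∈ P) → ((lnk j, j) ∈ P ∧ (lnk j, j - 1) ∈ P) :=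
    ⟨fun j => if h : ∃ i : ℤ, (i, j) ∈ P ∧ (i, j - 1) ∈ P then h.choose else 0,
     fun j h => by simp only [dif_pos h]; exact h.choose_spec⟩
  set g : ℤ → ZMod 2 := fun j => E (lnk j, j - 1) + E (lnk j, j) with hgdef
  set Y : ℤ → ZMod 2 := fun j => ∑ j' ∈ Finset.Ioc jmin j, g j' with hYdef
  set X : ℤ → ZMod 2 := fun i => E (i, cm i) + Y (cm i) with hXdef
  have hYstep : ∀ j : ℤ, jmin ≤ j → Y (j + 1) = Y j + g (j + 1) := by
    intro j hj
    have hins : Finset.Ioc jmin (j + 1) = insert (j + 1) (Finset.Ioc jmin j) := by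
      ext t; simp only [Finset.mem_Ioc, Finset.mem_insert]; omega
    have hnm : (j + 1) ∉ Finset.Ioc jmin j := by simp only [Finset.mem_Ioc]; omega
    simp only [hYdef]
    rw [hins, Finset.sum_insert hnm]
    ring
  have hsol : ∀ i j : ℤ, (i, j) ∈ P → X i + Y j = E (i, j) := by
    intro i j hij
    have hcmle := hcmmin i j hij
    have hcmP' := hcmP i ⟨j, hij⟩
    have main : ∀ j' : ℤ, cm i ≤ j' → ((i, j') ∈ P → X i + Y j' = E (i, j')) := by
      refine fun j' hj' => Int.le_induction
        (motive := fun t _ => (i, t) ∈ P → X i + Y t = E (i, t)) ?_ ?_ j' hj'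
      · intro _
        simp only [hXdef]
        linear_combination zmod2_self (Y (cm i))
      · intro n hn ih hmem
        have hmemn : (i, n) ∈ P := by
          rcases eq_or_lt_of_le hn with rfl|hlt
          · exact hcmP'
          · exact hconv.2 i (cm i) n (n + 1) hcmP' hmem hlt (by omega)
        have hihn := ih hmemn
        have hjm : jmin ≤ n := hjminle (i, n) hmemn
        have hstepY := hYstep n hjm
        have hlex : ∃ i' : ℤ, (i', n + 1) ∈ P ∧ (i', n + 1 - 1) ∈ P := by
          refine ⟨i, hmem, ?_⟩
          have hcast : (n : ℤ) + 1 - 1 = n := by ring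
          rw [hcast]; exact hmemn
        obtain ⟨hw1, hw0⟩ := hlnkspec (n + 1) hlex
        have hcast : (n : ℤ) + 1 - 1 = n := by ring
        rw [hcast] at hw0
        have hg : g (n + 1) = E (lnk (n + 1), n) + E (lnk (n + 1), n + 1) := by
          simp only [hgdef, hcast]
        have hchain := chain2 i (lnk (n + 1)) n hmemn hmem hw0 hw1
        rw [hstepY, hg]
        linear_combination hihn + hchain + zmod2_self (E (lnk (n + 1), n)) +
          zmod2_self (E (lnk (n + 1), n + 1)) - zmod2_self (E (i, n + 1))
    exact main j hcmle hij
  -- build the coloring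
  set A : ℤ → ZMod 3 := isum (fun i => zc (X i)) with hAdef
  set B : ℤ → ZMod 3 := isum (fun j => zc (Y j)) with hBdef
  have hA : ∀ i : ℤ, A (i + 1) = A i + zc (X i) := fun i => isum_succ _ i
  have hB : ∀ j : ℤ, B (j + 1) = B j + zc (Y j) := fun j => isum_succ _ j
  have hcase : ∀ u v : {v : ℤ × ℤ // v ∈ polyVerts P},
      ((∃ c ∈ P, IsSideOf c u.val v.val) ∨
       (∃ c ∈ P, (d c = 0 ∧ u.val = (c.1, c.2) ∧ v.val = (c.1 + 1, c.2 + 1)) ∨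
                 (d c = 1 ∧ u.val = (c.1 + 1, c.2) ∧ v.val = (c.1, c.2 + 1)))) →
      (A u.val.1 + B u.val.2) ≠ (A v.val.1 + B v.val.2) := by
    intro u v hrel
    rcases hrel with ⟨c, hc, hs⟩ | ⟨c, hc, ⟨h0, hu, hv⟩ | ⟨h1, hu, hv⟩⟩
    · rw [IsSideOf] at hs
      rcases hs with ⟨hu, hv⟩|⟨hu, hv⟩|⟨hu, hv⟩|⟨hu, hv⟩ <;>
          simp only [hu, hv] <;> intro heq
      · exact zc_ne_zero (X c.1) (by rw [hA] at heq; linear_combination -heq)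
      · exact zc_ne_zero (X c.1) (by rw [hA] at heq; linear_combination -heq)
      · exact zc_ne_zero (Y c.2) (by rw [hB] at heq; linear_combination -heq)
      · exact zc_ne_zero (Y c.2) (by rw [hB] at heq; linear_combination -heq)
    · simp only [hu, hv]
      intro heq
      rw [hA, hB] at heq
      have hz : zc (X c.1) + zc (Y c.2) = 0 := by linear_combination -heq
      have hcP : (c.1, c.2) ∈ P := by rw [Prod.mk.eta]; exact hc
      have hE0 : E (c.1, c.2) = 0 := by
        simp only [hEdef]
        rw [Prod.mk.eta, h0]
        rfl
      have hXY : X c.1 = Y c.2 := by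
        apply zmod2_eq_of_add_zero
        rw [hsol c.1 c.2 hcP, hE0]
      exact zc_add_self_ne (X c.1) (Y c.2) hXY hz
    · simp only [hu, hv]
      intro heq
      rw [hA, hB] at heq
      have hz : zc (X c.1) = zc (Y c.2) := by linear_combination heq
      have hcP : (c.1, c.2) ∈ P := by rw [Prod.mk.eta]; exact hc
      have hE1 : E (c.1, c.2) = 1 := by
        simp only [hEdef]
        rw [Prod.mk.eta, h1]
        rfl
      have hXY : X c.1 ≠ Y c.2 := by
        apply zmod2_ne_of_add_one
        rw [hsol c.1 c.2 hcP, hE1]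
      exact zc_ne_of_ne (X c.1) (Y c.2) hXY hz
  have hcol : (PolyTri P d).Coloring (ZMod 3) := by
    refine SimpleGraph.Coloring.mk (fun v => A v.val.1 + B v.val.2) ?_
    intro u v hadj
    simp only [PolyTri, SimpleGraph.fromRel_adj] at hadj
    rcases hadj.2 with h|h
    · exact hcase u v h
    · exact (hcase v u h).symm
  have hcol3 := hcol.colorable
  rwa [ZMod.card] at hcol3



/-- A triangulation of a convex polyomino is 3-colorable if and only if it contains no
induced subgraph isomorphic to `T1` or `T2`. -/
theorem polyTri_colorable_iff_no_T1_T2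
    (P : Finset (ℤ × ℤ)) (hpoly : IsPolyomino P) (hconv : IsConvexPolyomino P)
    (d : ℤ × ℤ → Fin 2) :
    (PolyTri P d).Colorable 3 ↔
      (¬ Nonempty (T1 ↪g PolyTri P d) ∧ ¬ Nonempty (T2 ↪g PolyTri P d)) := by
  constructor
  · intro hcol
    constructor
    · rintro ⟨e⟩
      exact T1_not_colorable (SimpleGraph.Colorable.of_hom e.toHom hcol)
    · rintro ⟨e⟩
      exact T2_not_colorable (SimpleGraph.Colorable.of_hom e.toHom hcol)
  · rintro ⟨h1, h2⟩
    apply colorable_of_even P d hpoly hconv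
    intro x y c00 c10 c01 c11
    by_contra hodd
    have hodd' : ((d (x, y)).val + (d (x + 1, y)).val + (d (x, y + 1)).val +
        (d (x + 1, y + 1)).val) % 2 = 1 := by omega
    rcases odd_block_T1T2 P d x y c00 c10 c01 c11 hodd' with he|he
    · exact h1 he
    · exact h2 he
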